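/- For every g ≥ 3 and every integer m, the matrix T₁^m = I_{2g} + m·Δ (Δ having a single 1 in position (1,2)) is a commutator in Sp(2g,ℤ). -/

import Mathlib

open Matrix

/-- The block-diagonal symplectic form matrix of size `2g`:
`g` diagonal blocks `!![0,1;-1,0]`. -/
def Jmat (g : ℕ) : Matrix (Fin (2 * g)) (Fin (2 * g)) ℤ :=
  Matrix.of fun i j =>
    if (i : ℕ) + 1 = (j : ℕ) ∧ Even (i : ℕ) then 1
    else if (j : ℕ) + 1 = (i : ℕ) ∧ Even (j : ℕ) then -1 else 0

/- ---------- auxiliary 6×6 construction ---------- -/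

/-- Entrywise formula for the symplectic form, on naturals. -/
def jf (i j : ℕ) : ℤ :=
  if i + 1 = j ∧ i % 2 = 0 then 1 else if j + 1 = i ∧ j % 2 = 0 then -1 else 0

def J6 : Matrix (Fin 6) (Fin 6) ℤ :=
  !![0,1,0,0,0,0; -1,0,0,0,0,0; 0,0,0,1,0,0; 0,0,-1,0,0,0; 0,0,0,0,0,1; 0,0,0,0,-1,0]

def X6 (m p : ℤ) : Matrix (Fin 6) (Fin 6) ℤ :=
  !![p,  0, 1, 0,      -m, 0;
     0,  0, 0, 1,       0, 0;
     1,  0, 0, 0,       0, 0;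
     0,  1, 0, -p-m*m,  0, -m;
     -m, 0, 0, 0,      -1, 0;
     0,  0, 0, -m,      0, -1]

def Xi6 (m p : ℤ) : Matrix (Fin 6) (Fin 6) ℤ :=
  !![0,  0, 1,      0,  0, 0;
     0,  p, 0,      1,  0, -m;
     1,  0, -p-m*m, 0, -m, 0;
     0,  1, 0,      0,  0, 0;
     0,  0, -m,     0, -1, 0;
     0, -m, 0,      0,  0, -1]

def Y6 : Matrix (Fin 6) (Fin 6) ℤ :=
  !![1,0,0,1,0,0; 0,1,0,0,0,0; 0,1,1,0,0,0; 0,0,0,1,0,0; 0,0,0,0,1,1; 0,0,0,0,0,1]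

def Yi6 : Matrix (Fin 6) (Fin 6) ℤ :=
  !![1,0,0,-1,0,0; 0,1,0,0,0,0; 0,-1,1,0,0,0; 0,0,0,1,0,0; 0,0,0,0,1,-1; 0,0,0,0,0,1]

lemma jf_shift (a b : ℕ) : jf (6 + a) (6 + b) = jf a b := by
  unfold jf
  split_ifs <;> first | rfl | omega

@[simp] lemma cons_val_five' {α : Type*} {k : ℕ} (x : α) (u : Fin k.succ.succ.succ.succ.succ → α) :
    vecCons x u 5 = vecHead (vecTail (vecTail (vecTail (vecTail u)))) := rfl

lemma J6_eq : J6 = Matrix.of (fun i j : Fin 6 => jf (i : ℕ) (j : ℕ)) := by decide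

set_option maxHeartbeats 1000000 in
lemma hX6 (m p : ℤ) : (X6 m p)ᵀ * J6 * X6 m p = J6 := by
  ext i j
  fin_cases i <;> fin_cases j <;>
    simp [X6, J6, Matrix.mul_apply, Fin.sum_univ_succ, Matrix.transpose_apply,
      Matrix.vecHead, Matrix.vecTail]

lemma hY6 : Y6ᵀ * J6 * Y6 = J6 := by decide

set_option maxHeartbeats 1000000 in
lemma hXi6 (m p : ℤ) : X6 m p * Xi6 m p = 1 := by
  ext i j
  fin_cases i <;> fin_cases j <;>
    simp [X6, Xi6, Matrix.mul_apply, Fin.sum_univ_succ, Matrix.one_apply,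
      Matrix.vecHead, Matrix.vecTail] <;>
    ring1

lemma hYi6 : Y6 * Yi6 = 1 := by decide

def L1 (m p : ℤ) : Matrix (Fin 6) (Fin 6) ℤ :=
  !![p,  1, 1, p,      -m, -m;
     0,  0, 0, 1,       0, 0;
     1,  0, 0, 1,       0, 0;
     0,  1, 0, -p-m*m,  0, -m;
     -m, 0, 0, -m,     -1, -1;
     0,  0, 0, -m,      0, -1]

def L2 (m p : ℤ) : Matrix (Fin 6) (Fin 6) ℤ :=
  !![0, -1,     1,      0,  0,  0;
     0,  p,     0,      1,  0, -m;
     1,  p+m*m, -p-m*m, -1, -m, m;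
     0,  1,     0,      0,  0,  0;
     0,  m,    -m,      0, -1,  1;
     0, -m,     0,      0,  0, -1]

set_option maxHeartbeats 1000000 in
lemma hL1 (m p : ℤ) : X6 m p * Y6 = L1 m p := by
  ext i j
  fin_cases i <;> fin_cases j <;>
    simp [X6, Y6, L1, Matrix.mul_apply, Fin.sum_univ_succ, Matrix.vecHead, Matrix.vecTail]

set_option maxHeartbeats 1000000 in
lemma hL2 (m p : ℤ) : Xi6 m p * Yi6 = L2 m p := by
  ext i j
  fin_cases i <;> fin_cases j <;>
    simp [Xi6, Yi6, L2, Matrix.mul_apply, Fin.sum_univ_succ, Matrix.vecHead, Matrix.vecTail] <;>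
    try ring1

set_option maxHeartbeats 1000000 in
lemma hC6 (m p : ℤ) (hp : 2 * p + m * m = m) :
    X6 m p * Y6 * Xi6 m p * Yi6
      = 1 + m • Matrix.single (0 : Fin 6) (1 : Fin 6) (1 : ℤ) := by
  rw [mul_assoc, hL1, hL2]
  ext i j
  fin_cases i <;> fin_cases j <;>
    simp [L1, L2, Matrix.mul_apply, Fin.sum_univ_succ, Matrix.one_apply,
      Matrix.single, Matrix.vecHead, Matrix.vecTail] <;>
    first | ring1 | linear_combination hp

/- ---------- assembly ---------- -/

/-- For every `g ≥ 3` and every integer `m`, the matrix `T₁^m = I + m·Δ`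
(`Δ` having a single `1` in position `(1,2)`) is a commutator in `Sp(2g,ℤ)`. -/
theorem stmt_14 (g : ℕ) (hg : 3 ≤ g) (m : ℤ) :
    ∃ X Y : Matrix (Fin (2 * g)) (Fin (2 * g)) ℤ,
      Xᵀ * Jmat g * X = Jmat g ∧ Yᵀ * Jmat g * Y = Jmat g ∧
        X * Y * X⁻¹ * Y⁻¹ =
          1 + m • Matrix.single
            (⟨0, by omega⟩ : Fin (2 * g)) (⟨1, by omega⟩ : Fin (2 * g)) (1 : ℤ) := by
  -- choose p with 2p + m² = m
  obtain ⟨p, hp⟩ : ∃ p : ℤ, 2 * p + m * m = m := by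
    rcases Int.even_or_odd m with ⟨k, hk⟩ | ⟨k, hk⟩
    · exact ⟨k - 2*k*k, by subst hk; ring⟩
    · exact ⟨-2*k*k - k, by subst hk; ring⟩
  set n := 2 * g - 6 with hn
  have h6 : 6 + n = 2 * g := by omega
  let e : Fin 6 ⊕ Fin n ≃ Fin (2 * g) := finSumFinEquiv.trans (finCongr h6)
  let Φ := Matrix.reindexAlgEquiv ℤ ℤ e
  have hval_l : ∀ a : Fin 6, ((e (Sum.inl a) : Fin (2 * g)) : ℕ) = (a : ℕ) := by
    intro a; simp [e]
  have hval_r : ∀ b : Fin n, ((e (Sum.inr b) : Fin (2 * g)) : ℕ) = 6 + (b : ℕ) := by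
    intro b; simp [e]
  have hΦ_apply : ∀ (M : Matrix (Fin 6 ⊕ Fin n) (Fin 6 ⊕ Fin n) ℤ) (a b : Fin 6 ⊕ Fin n),
      Φ M (e a) (e b) = M a b := by
    intro M a b
    simp [Φ, Matrix.reindexAlgEquiv_apply, Matrix.reindex_apply]
  have hJmat : ∀ (i j : Fin (2 * g)), Jmat g i j = jf (i : ℕ) (j : ℕ) := by
    intro i j
    simp only [Jmat, jf, Matrix.of_apply, Nat.even_iff]
  set Jn : Matrix (Fin n) (Fin n) ℤ := Matrix.of (fun i j : Fin n => jf (i : ℕ) (j : ℕ)) with hJn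
  have hJ : Jmat g = Φ (Matrix.fromBlocks J6 0 0 Jn) := by
    ext i j
    obtain ⟨a, rfl⟩ := e.surjective i
    obtain ⟨b, rfl⟩ := e.surjective j
    rw [hΦ_apply, hJmat]
    rcases a with a | a <;> rcases b with b | b
    · rw [hval_l, hval_l]
      simp [Matrix.fromBlocks, J6_eq]
    · rw [hval_l, hval_r]
      simp only [Matrix.fromBlocks, Sum.elim_inl, Sum.elim_inr, Matrix.zero_apply]
      unfold jf; split_ifs <;> first | rfl | omega
    · rw [hval_r, hval_l]
      simp only [Matrix.fromBlocks, Sum.elim_inl, Sum.elim_inr, Matrix.zero_apply]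
      unfold jf; split_ifs <;> first | rfl | omega
    · rw [hval_r, hval_r, jf_shift]
      simp [Matrix.fromBlocks, Jn]
  have hT : ∀ M : Matrix (Fin 6 ⊕ Fin n) (Fin 6 ⊕ Fin n) ℤ, (Φ M)ᵀ = Φ Mᵀ := by
    intro M
    simp [Φ, Matrix.reindexAlgEquiv_apply, Matrix.reindex_apply, Matrix.transpose_submatrix]
  have hE : Matrix.single (⟨0, by omega⟩ : Fin (2 * g)) (⟨1, by omega⟩ : Fin (2 * g)) (1 : ℤ)
      = Φ (Matrix.fromBlocks (Matrix.single (0 : Fin 6) (1 : Fin 6) (1 : ℤ)) 0 0 0) := by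
    ext i j
    obtain ⟨a, rfl⟩ := e.surjective i
    obtain ⟨b, rfl⟩ := e.surjective j
    rw [hΦ_apply]
    rcases a with a | a <;> rcases b with b | b <;>
      simp only [Matrix.fromBlocks_apply₁₁, Matrix.fromBlocks_apply₁₂, Matrix.fromBlocks_apply₂₁,
        Matrix.fromBlocks_apply₂₂, Matrix.zero_apply, Matrix.single, Matrix.of_apply,
        Fin.ext_iff, hval_l, hval_r, Fin.val_zero, Fin.val_one] <;>
      split_ifs <;> first | rfl | omega
  refine ⟨Φ (Matrix.fromBlocks (X6 m p) 0 0 1), Φ (Matrix.fromBlocks Y6 0 0 1), ?_, ?_, ?_⟩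
  · rw [hJ, hT, ← _root_.map_mul, ← _root_.map_mul]
    congr 1
    rw [Matrix.fromBlocks_transpose, Matrix.fromBlocks_multiply, Matrix.fromBlocks_multiply]
    simp [hX6 m p]
  · rw [hJ, hT, ← _root_.map_mul, ← _root_.map_mul]
    congr 1
    rw [Matrix.fromBlocks_transpose, Matrix.fromBlocks_multiply, Matrix.fromBlocks_multiply]
    simp [hY6]
  · have hXinv : (Φ (Matrix.fromBlocks (X6 m p) 0 0 1))⁻¹
        = Φ (Matrix.fromBlocks (Xi6 m p) 0 0 1) := by
      apply Matrix.inv_eq_right_inv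
      rw [← _root_.map_mul, Matrix.fromBlocks_multiply]
      simp only [Matrix.mul_zero, Matrix.zero_mul, Matrix.mul_one, Matrix.one_mul,
        add_zero, zero_add, hXi6 m p, Matrix.fromBlocks_one, _root_.map_one]
    have hYinv : (Φ (Matrix.fromBlocks Y6 0 0 1))⁻¹ = Φ (Matrix.fromBlocks Yi6 0 0 1) := by
      apply Matrix.inv_eq_right_inv
      rw [← _root_.map_mul, Matrix.fromBlocks_multiply]
      simp only [Matrix.mul_zero, Matrix.zero_mul, Matrix.mul_one, Matrix.one_mul,
        add_zero, zero_add, hYi6, Matrix.fromBlocks_one, _root_.map_one]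
    rw [hXinv, hYinv, ← _root_.map_mul, ← _root_.map_mul, ← _root_.map_mul,
      Matrix.fromBlocks_multiply, Matrix.fromBlocks_multiply, Matrix.fromBlocks_multiply]
    simp only [Matrix.mul_zero, Matrix.zero_mul, Matrix.mul_one, Matrix.one_mul,
      add_zero, zero_add]
    rw [hC6 m p hp, hE]
    have hsplit : Matrix.fromBlocks
          (1 + m • Matrix.single (0 : Fin 6) (1 : Fin 6) (1 : ℤ))
          (0 : Matrix (Fin 6) (Fin n) ℤ) (0 : Matrix (Fin n) (Fin 6) ℤ)
          (1 : Matrix (Fin n) (Fin n) ℤ)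
        = 1 + m • Matrix.fromBlocks (Matrix.single (0 : Fin 6) (1 : Fin 6) (1 : ℤ))
            0 0 0 := by
      ext (i | i) (j | j) <;>
        simp [Matrix.fromBlocks, Matrix.one_apply, Matrix.single]
    rw [hsplit, _root_.map_add, _root_.map_one, _root_.map_zsmul]
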